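/- arXiv:1609.03919 — 2 statements merged into one kernel-verified Lean document; each statement's English description precedes it below -/
import Mathlib

section
/- Let p be an odd prime, n a positive integer, S coprime to p, and nonnegative integers \alpha, \beta \le n. Then \sum over x in [0,p^n) with p^\alpha | x of e^{2\pi i S p^\beta x^2/p^n} equals p^{n-\alpha} if 2\alpha+\beta \ge n, and equals p^\beta G(S;p^{n-\beta}) if 2\alpha+\beta \le n. -/
open Finset

noncomputable def Gsum (S : ℤ) (k : ℕ) : ℂ :=
  ∑ x ∈ Finset.range k,
    Complex.exp (2 * Real.pi * Complex.I * ((S * (x : ℤ) ^ 2 : ℤ) : ℂ) / (k : ℂ))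

noncomputable def Gsum2 (a b c S : ℤ) (k : ℕ) : ℂ :=
  ∑ x ∈ Finset.range k, ∑ y ∈ Finset.range k,
    Complex.exp (2 * Real.pi * Complex.I *
      ((S * (a * (x : ℤ) ^ 2 + b * (x : ℤ) * (y : ℤ) + c * (y : ℤ) ^ 2) : ℤ) : ℂ) / (k : ℂ))

noncomputable def ep (a : ℤ) (k : ℕ) : ℂ :=
  Complex.exp (2 * Real.pi * Complex.I * (a : ℂ) / (k : ℂ))

lemma ep_add (a b : ℤ) (k : ℕ) : ep (a + b) k = ep a k * ep b k := by
  unfold ep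
  rw [← Complex.exp_add]
  push_cast
  ring_nf

lemma ep_dvd_one (a : ℤ) (k : ℕ) (h : (k : ℤ) ∣ a) : ep a k = 1 := by
  rcases h with ⟨c, rfl⟩
  unfold ep
  rcases Nat.eq_zero_or_pos k with hk | hk
  · subst hk; simp
  · have hk' : (k : ℂ) ≠ 0 := Nat.cast_ne_zero.mpr hk.ne'
    have : 2 * (Real.pi : ℂ) * Complex.I * ((k : ℤ) * c : ℤ) / (k : ℂ)
        = (c : ℂ) * (2 * Real.pi * Complex.I) := by
      push_cast
      field_simp
    rw [this, Complex.exp_int_mul_two_pi_mul_I]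

lemma ep_mul_nat (a : ℤ) (k c : ℕ) (hc : c ≠ 0) :
    ep (a * (c : ℤ)) (k * c) = ep a k := by
  unfold ep
  rcases Nat.eq_zero_or_pos k with hk | hk
  · subst hk; simp
  · have hk' : (k : ℂ) ≠ 0 := Nat.cast_ne_zero.mpr hk.ne'
    have hc' : (c : ℂ) ≠ 0 := Nat.cast_ne_zero.mpr hc
    congr 1
    push_cast
    field_simp

lemma ep_pow (c : ℤ) (k : ℕ) (v : ℕ) : ep (c * v) k = ep c k ^ v := by
  unfold ep
  rw [← Complex.exp_nat_mul]
  congr 1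
  push_cast
  ring

lemma sum_ep_mul (q : ℕ) (hq : 0 < q) (c : ℤ) :
    ∑ v ∈ range q, ep (c * v) q = if (q : ℤ) ∣ c then (q : ℂ) else 0 := by
  simp only [ep_pow]
  by_cases h : (q : ℤ) ∣ c
  · rw [if_pos h, ep_dvd_one c q h]
    simp
  · rw [if_neg h]
    have hne : ep c q ≠ 1 := by
      intro hone
      apply h
      unfold ep at hone
      rw [Complex.exp_eq_one_iff] at hone
      obtain ⟨m, hm⟩ := hone
      have hq' : (q : ℂ) ≠ 0 := Nat.cast_ne_zero.mpr hq.ne'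
      have h2 : (2 * (Real.pi : ℂ) * Complex.I) ≠ 0 := by
        simp [Real.pi_ne_zero, Complex.I_ne_zero, Complex.ofReal_ne_zero]
      have : (c : ℂ) = (m : ℂ) * q := by
        field_simp at hm
        have := hm
        have h3 : (2 * (Real.pi:ℂ) * Complex.I) * (c:ℂ)
            = (2 * (Real.pi:ℂ) * Complex.I) * ((m:ℂ) * q) := by
          rw [this]; ring
        exact mul_left_cancel₀ h2 h3
      exact ⟨m, by rw [mul_comm]; exact_mod_cast this⟩
    rw [geom_sum_eq hne]
    have hpow : ep c q ^ q = 1 := by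
      rw [← ep_pow]
      apply ep_dvd_one
      exact ⟨c, mul_comm _ _⟩
    rw [hpow]
    simp

lemma sum_range_mul (f : ℕ → ℂ) (a : ℕ) :
    ∀ b : ℕ, ∑ x ∈ range (b * a), f x = ∑ v ∈ range b, ∑ u ∈ range a, f (v * a + u) := by
  intro b
  induction b with
  | zero => simp
  | succ b ih =>
      rw [Nat.succ_mul, Finset.sum_range_add, ih, Finset.sum_range_succ]

lemma filter_dvd_range (d t : ℕ) (hd : 0 < d) :
    (range (d * t)).filter (fun x => d ∣ x) = (range t).image (fun y => d * y) := by
  ext x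
  simp only [mem_filter, mem_range, mem_image]
  constructor
  · rintro ⟨hx, y, rfl⟩
    exact ⟨y, by exact lt_of_mul_lt_mul_left hx (Nat.zero_le d), rfl⟩
  · rintro ⟨y, hy, rfl⟩
    exact ⟨by exact Nat.mul_lt_mul_left hd |>.mpr hy, ⟨y, rfl⟩⟩

lemma sum_periodic (S : ℤ) (N t : ℕ) :
    ∑ y ∈ range (t * N), ep (S * (y : ℤ) ^ 2) N
      = t * ∑ y ∈ range N, ep (S * (y : ℤ) ^ 2) N := by
  rw [sum_range_mul (fun y => ep (S * (y : ℤ) ^ 2) N) N t]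
  have key : ∀ v u : ℕ, ep (S * ((v * N + u : ℕ) : ℤ) ^ 2) N = ep (S * (u : ℤ) ^ 2) N := by
    intro v u
    have h1 : S * ((v * N + u : ℕ) : ℤ) ^ 2
        = S * (u : ℤ) ^ 2 + (N : ℤ) * (S * ((v : ℤ) ^ 2 * N + 2 * v * u)) := by
      push_cast; ring
    rw [h1, ep_add, ep_dvd_one _ N ⟨_, rfl⟩, mul_one]
  simp only [key]
  rw [Finset.sum_const, card_range, nsmul_eq_mul]

lemma gstep (p : ℕ) (hp : p.Prime) (hodd : p ≠ 2) (S : ℤ) (hS : IsCoprime S (p : ℤ)) (m : ℕ) :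
    ∑ y ∈ range (p ^ (m + 2)), ep (S * (y : ℤ) ^ 2) (p ^ (m + 2))
      = p * ∑ y ∈ range (p ^ m), ep (S * (y : ℤ) ^ 2) (p ^ m) := by
  have hp0 : 0 < p := hp.pos
  have hpZ : Prime (p : ℤ) := Nat.prime_iff_prime_int.mp hp
  have hpne : ¬ (p : ℤ) ∣ 2 := by
    intro h
    have : p ∣ 2 := by exact_mod_cast h
    have := (Nat.prime_dvd_prime_iff_eq hp Nat.prime_two).mp this
    exact hodd this
  have hpS : ¬ (p : ℤ) ∣ S := fun h => hpZ.not_unit (hS.isUnit_of_dvd' h dvd_rfl)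
  have hsplit : p ^ (m + 2) = p * p ^ (m + 1) := by ring
  rw [hsplit, sum_range_mul]
  have key : ∀ v u : ℕ, ep (S * ((v * p ^ (m + 1) + u : ℕ) : ℤ) ^ 2) (p * p ^ (m + 1))
      = ep (S * (u : ℤ) ^ 2) (p * p ^ (m + 1)) * ep ((2 * S * u) * v) p := by
    intro v u
    have h1 : S * ((v * p ^ (m + 1) + u : ℕ) : ℤ) ^ 2
        = S * (u : ℤ) ^ 2 + (((2 * S * u) * v) * ((p : ℤ) ^ (m + 1))
          + ((p * p ^ (m + 1) : ℕ) : ℤ) * (S * (v : ℤ) ^ 2 * p ^ m)) := by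
      push_cast; ring
    rw [h1, ep_add, ep_add]
    have h2 : ep (((2 * S * u) * v) * ((p : ℤ) ^ (m + 1))) (p * p ^ (m + 1))
        = ep ((2 * S * u) * v) p := by
      have := ep_mul_nat ((2 * S * u) * v) p (p ^ (m + 1)) (pow_ne_zero _ hp0.ne')
      rw [← this]; norm_cast
    rw [h2, ep_dvd_one _ _ ⟨_, rfl⟩, mul_one]
  simp only [key]
  rw [Finset.sum_comm]
  have inner : ∀ u : ℕ, ∑ v ∈ range p,
      ep (S * (u : ℤ) ^ 2) (p * p ^ (m + 1)) * ep ((2 * S * u) * v) p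
      = ep (S * (u : ℤ) ^ 2) (p * p ^ (m + 1)) * (if p ∣ u then (p : ℂ) else 0) := by
    intro u
    rw [← Finset.mul_sum, sum_ep_mul p hp0]
    congr 2
    simp only [eq_iff_iff]
    constructor
    · intro h
      rcases hpZ.dvd_mul.mp h with h' | h'
      · rcases hpZ.dvd_mul.mp h' with h'' | h''
        · exact absurd h'' hpne
        · exact absurd h'' hpS
      · exact_mod_cast h'
    · intro h
      exact Dvd.dvd.mul_left (by exact_mod_cast h) _
  simp only [inner]
  simp only [mul_ite, mul_zero, Finset.sum_ite_eq, ← Finset.sum_filter]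
  have hsplit2 : p ^ (m + 1) = p * p ^ m := by ring
  rw [hsplit2, filter_dvd_range p (p ^ m) hp0,
    Finset.sum_image (by intro a _ b _ h; exact Nat.eq_of_mul_eq_mul_left hp0 h)]
  rw [Finset.mul_sum]
  congr 1
  ext w
  have h3 : S * ((p * w : ℕ) : ℤ) ^ 2 = (S * (w : ℤ) ^ 2) * ((p ^ 2 : ℕ) : ℤ) := by
    push_cast; ring
  have h4 : p * (p * p ^ m) = p ^ m * p ^ 2 := by ring
  rw [h3, h4, ep_mul_nat _ _ _ (pow_ne_zero _ hp0.ne'), mul_comm]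

lemma giter (p : ℕ) (hp : p.Prime) (hodd : p ≠ 2) (S : ℤ) (hS : IsCoprime S (p : ℤ))
    (m : ℕ) : ∀ k : ℕ,
    ∑ y ∈ range (p ^ (m + 2 * k)), ep (S * (y : ℤ) ^ 2) (p ^ (m + 2 * k))
      = (p : ℂ) ^ k * ∑ y ∈ range (p ^ m), ep (S * (y : ℤ) ^ 2) (p ^ m) := by
  intro k
  induction k with
  | zero => simp
  | succ k ih =>
      have h1 : m + 2 * (k + 1) = (m + 2 * k) + 2 := by ring
      rw [h1, gstep p hp hodd S hS (m + 2 * k), ih]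
      ring

lemma Gsum_eq (S : ℤ) (k : ℕ) : Gsum S k = ∑ x ∈ range k, ep (S * (x : ℤ) ^ 2) k := rfl

theorem stmt_6 (p : ℕ) (hp : p.Prime) (hodd : p ≠ 2) (n : ℕ) (hn : 0 < n)
    (S : ℤ) (hS : IsCoprime S (p : ℤ)) (α β : ℕ) (hα : α ≤ n) (hβ : β ≤ n) :
    (2 * α + β ≥ n →
      ∑ x ∈ (Finset.range (p ^ n)).filter (fun x => p ^ α ∣ x),
          Complex.exp (2 * Real.pi * Complex.I *
            ((S * (p : ℤ) ^ β * (x : ℤ) ^ 2 : ℤ) : ℂ) / ((p : ℂ) ^ n)) =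
        (p : ℂ) ^ (n - α)) ∧
    (2 * α + β ≤ n →
      ∑ x ∈ (Finset.range (p ^ n)).filter (fun x => p ^ α ∣ x),
          Complex.exp (2 * Real.pi * Complex.I *
            ((S * (p : ℤ) ^ β * (x : ℤ) ^ 2 : ℤ) : ℂ) / ((p : ℂ) ^ n)) =
        (p : ℂ) ^ β * Gsum S (p ^ (n - β))) := by
  have hp0 : 0 < p := hp.pos
  have hterm : ∀ x : ℕ,
      Complex.exp (2 * Real.pi * Complex.I *
        ((S * (p : ℤ) ^ β * (x : ℤ) ^ 2 : ℤ) : ℂ) / ((p : ℂ) ^ n))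
      = ep (S * (p : ℤ) ^ β * (x : ℤ) ^ 2) (p ^ n) := by
    intro x
    unfold ep
    norm_cast
  have hsplit : p ^ n = p ^ α * p ^ (n - α) := by
    rw [← pow_add]
    congr 1
    omega
  have hreindex :
      ∑ x ∈ (Finset.range (p ^ n)).filter (fun x => p ^ α ∣ x),
        Complex.exp (2 * Real.pi * Complex.I *
          ((S * (p : ℤ) ^ β * (x : ℤ) ^ 2 : ℤ) : ℂ) / ((p : ℂ) ^ n))
      = ∑ y ∈ range (p ^ (n - α)), ep (S * (p : ℤ) ^ β * ((p ^ α * y : ℕ) : ℤ) ^ 2) (p ^ n) := by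
    simp only [hterm]
    rw [hsplit, filter_dvd_range _ _ (pow_pos hp0 α),
      Finset.sum_image (by
        intro a _ b _ h
        exact Nat.eq_of_mul_eq_mul_left (pow_pos hp0 α) h)]
  constructor
  · intro hge
    rw [hreindex]
    have hone : ∀ y : ℕ, ep (S * (p : ℤ) ^ β * ((p ^ α * y : ℕ) : ℤ) ^ 2) (p ^ n) = 1 := by
      intro y
      apply ep_dvd_one
      refine ⟨(p : ℤ) ^ (2 * α + β - n) * S * (y : ℤ) ^ 2, ?_⟩
      have hpow : (p : ℤ) ^ β * ((p : ℤ) ^ α) ^ 2 = (p : ℤ) ^ n * (p : ℤ) ^ (2 * α + β - n) := by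
        rw [← pow_mul, ← pow_add, ← pow_add]
        congr 1
        omega
      push_cast
      calc S * (p : ℤ) ^ β * ((p : ℤ) ^ α * (y : ℤ)) ^ 2
          = S * ((p : ℤ) ^ β * ((p : ℤ) ^ α) ^ 2) * (y : ℤ) ^ 2 := by ring
        _ = (p : ℤ) ^ n * ((p : ℤ) ^ (2 * α + β - n) * S * (y : ℤ) ^ 2) := by
            rw [hpow]; ring
    simp only [hone]
    rw [Finset.sum_const, card_range, nsmul_eq_mul, mul_one]
    push_cast
    ring
  · intro hle
    rw [hreindex]
    set m := n - (2 * α + β) with hm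
    have hterm2 : ∀ y : ℕ,
        ep (S * (p : ℤ) ^ β * ((p ^ α * y : ℕ) : ℤ) ^ 2) (p ^ n)
        = ep (S * (y : ℤ) ^ 2) (p ^ m) := by
      intro y
      have h1 : S * (p : ℤ) ^ β * ((p ^ α * y : ℕ) : ℤ) ^ 2
          = (S * (y : ℤ) ^ 2) * ((p ^ (2 * α + β) : ℕ) : ℤ) := by
        push_cast
        rw [show 2 * α + β = β + α * 2 by omega, pow_add, pow_mul]
        ring
      have h2 : p ^ n = p ^ m * p ^ (2 * α + β) := by
        rw [← pow_add]
        congr 1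
        omega
      rw [h1, h2, ep_mul_nat _ _ _ (pow_ne_zero _ hp0.ne')]
    simp only [hterm2]
    have h3 : p ^ (n - α) = p ^ (α + β) * p ^ m := by
      rw [← pow_add]
      congr 1
      omega
    rw [h3, sum_periodic]
    have h4 : n - β = m + 2 * α := by omega
    rw [Gsum_eq, h4, giter p hp hodd S hS m α]
    push_cast
    ring
end

section
/- Let n \ge 1, S odd, w an integer, and \alpha,\beta nonnegative integers with 2\alpha+\beta \le n-2. Then \sum_{x=0}^{2^n-1} e^{2\pi i S 2^\beta (2^\alpha x + w)^2 / 2^n} equals 0 if 2^\alpha \nmid w, and equals 2^{\alpha+\beta} G(S;2^{n-\beta}) if 2^\alpha | w. -/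
open Finset

/-! ### auxiliary machinery -/

noncomputable def ee (q : ℚ) : ℂ := Complex.exp (2 * Real.pi * Complex.I * q)

lemma ee_add (a b : ℚ) : ee (a + b) = ee a * ee b := by
  unfold ee
  rw [← Complex.exp_add]
  push_cast
  ring_nf

lemma ee_int (m : ℤ) : ee m = 1 := by
  unfold ee
  rw [show (2 * Real.pi * Complex.I * ((m : ℚ) : ℂ)) = (m : ℤ) * (2 * Real.pi * Complex.I) by
    push_cast; ring]
  exact Complex.exp_int_mul_two_pi_mul_I m

lemma ee_half_odd (m : ℤ) (hm : Odd m) : ee (m / 2) = -1 := by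
  obtain ⟨k, rfl⟩ := hm
  have : ((2 * k + 1 : ℤ) : ℚ) / 2 = (k : ℚ) + 1 / 2 := by push_cast; ring
  rw [this, show ((k : ℚ) + 1/2) = ((k : ℤ) : ℚ) + 1/2 by norm_num, ee_add, ee_int, one_mul]
  unfold ee
  rw [show (2 * Real.pi * Complex.I * ((1/2 : ℚ) : ℂ)) = Real.pi * Complex.I by
    norm_num; ring]
  exact Complex.exp_pi_mul_I

lemma ee_eq_of (a b : ℚ) (m : ℤ) (h : a = b + m) : ee a = ee b := by
  rw [h, ee_add, ee_int, mul_one]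

lemma ee_neg_of (a b : ℚ) (m : ℤ) (hm : Odd m) (h : a = b + m / 2) : ee a = - ee b := by
  rw [h, show ((m : ℚ)/2) = (((m:ℤ):ℚ))/2 by norm_num, ee_add, ee_half_odd m hm]
  ring

lemma sum_shift1 (F : ℤ → ℂ) (N : ℕ) (hper : ∀ x : ℤ, F (x + N) = F x) :
    ∑ x ∈ range N, F ((x : ℤ) + 1) = ∑ x ∈ range N, F x := by
  have h1 : ∑ x ∈ range (N + 1), F x = F 0 + ∑ x ∈ range N, F ((x : ℤ) + 1) := by
    rw [Finset.sum_range_succ']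
    simp [add_comm]
  have h2 : ∑ x ∈ range (N + 1), F x = (∑ x ∈ range N, F x) + F N := by
    rw [Finset.sum_range_succ]
  have h3 : F (N : ℤ) = F 0 := by simpa using hper 0
  have h4 := h1.symm.trans h2
  rw [h3] at h4
  linear_combination h4

lemma sum_shift_nat (F : ℤ → ℂ) (N : ℕ) (hper : ∀ x : ℤ, F (x + N) = F x) (t : ℕ) :
    ∑ x ∈ range N, F ((x : ℤ) + t) = ∑ x ∈ range N, F x := by
  induction t with
  | zero => simp
  | succ t ih =>
      have := sum_shift1 (fun x => F (x + t)) N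
        (fun x => by simpa [add_comm, add_left_comm, add_assoc] using hper (x + t))
      calc ∑ x ∈ range N, F ((x : ℤ) + (t+1 : ℕ))
          = ∑ x ∈ range N, F (((x : ℤ) + 1) + t) := by
            apply Finset.sum_congr rfl; intro x _; congr 1; push_cast; ring
        _ = ∑ x ∈ range N, F ((x : ℤ) + t) := this
        _ = ∑ x ∈ range N, F x := ih

lemma per_int_mul (F : ℤ → ℂ) (N : ℕ) (hper : ∀ x : ℤ, F (x + N) = F x) (k : ℤ) (x : ℤ) :
    F (x + N * k) = F x := by
  have hp : Function.Periodic F (N : ℤ) := hper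
  have := (hp.int_mul k) x
  simpa [mul_comm] using this

lemma sum_shift_int (F : ℤ → ℂ) (N : ℕ) (hN : 0 < N) (hper : ∀ x : ℤ, F (x + N) = F x)
    (v : ℤ) : ∑ x ∈ range N, F ((x : ℤ) + v) = ∑ x ∈ range N, F x := by
  have hNz : (N : ℤ) ≠ 0 := by exact_mod_cast hN.ne'
  have hv : v = (v % N) + N * (v / N) := by
    exact (Int.emod_add_mul_ediv v N).symm
  have hmod : 0 ≤ v % N := Int.emod_nonneg v hNz
  obtain ⟨t, ht⟩ : ∃ t : ℕ, (t : ℤ) = v % N := ⟨(v % N).toNat, Int.toNat_of_nonneg hmod⟩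
  calc ∑ x ∈ range N, F ((x : ℤ) + v)
      = ∑ x ∈ range N, F (((x : ℤ) + t) + N * (v / N)) := by
        apply Finset.sum_congr rfl; intro x _; congr 1; rw [ht]; omega
    _ = ∑ x ∈ range N, F ((x : ℤ) + t) := by
        apply Finset.sum_congr rfl; intro x _; exact per_int_mul F N hper _ _
    _ = ∑ x ∈ range N, F x := sum_shift_nat F N hper t

lemma sum_mul_period (F : ℤ → ℂ) (N d : ℕ) (hper : ∀ x : ℤ, F (x + N) = F x) :
    ∑ x ∈ range (d * N), F x = d * ∑ x ∈ range N, F x := by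
  induction d with
  | zero => simp
  | succ d ih =>
      have hsplit : ∑ x ∈ range (d * N + N), F x
          = ∑ x ∈ range (d * N), F x + ∑ x ∈ range N, F ((x : ℤ) + d * N) := by
        rw [Finset.sum_range_add]
        congr 1
        apply Finset.sum_congr rfl; intro x _; congr 1; push_cast; ring
      have hstep : ∀ x : ℤ, ∀ m : ℕ, F (x + m * N) = F x := by
        intro x m
        rw [show ((m:ℤ) * N) = (N:ℤ) * m by ring]
        exact per_int_mul F N hper m x
      rw [show (d+1) * N = d * N + N by ring, hsplit, ih]
      have : ∑ x ∈ range N, F ((x : ℤ) + d * N) = ∑ x ∈ range N, F x := by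
        apply Finset.sum_congr rfl; intro x _
        have := hstep x d
        push_cast at this ⊢
        exact this
      rw [this]; push_cast; ring

lemma sum_even_odd (F : ℤ → ℂ) (M : ℕ) :
    ∑ x ∈ range (2 * M), F x = ∑ y ∈ range M, F (2 * y) + ∑ y ∈ range M, F (2 * y + 1) := by
  induction M with
  | zero => simp
  | succ M ih =>
      rw [show 2 * (M + 1) = 2 * M + 1 + 1 by ring, Finset.sum_range_succ, Finset.sum_range_succ,
        Finset.sum_range_succ (fun y => F (2 * y)), Finset.sum_range_succ (fun y => F (2 * y + 1)),
        ih]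
      push_cast; abel

noncomputable def gg (S : ℤ) (k : ℕ) (x : ℤ) : ℂ := ee ((S : ℚ) * (x : ℚ) ^ 2 / 2 ^ k)

lemma two_pow_ne (k : ℕ) : ((2:ℚ) ^ k) ≠ 0 := by positivity

lemma gg_per (S : ℤ) (k : ℕ) (x : ℤ) : gg S k (x + 2 ^ k) = gg S k x := by
  unfold gg
  apply ee_eq_of _ _ (S * (2 * x + 2 ^ k))
  have h := two_pow_ne k
  push_cast
  field_simp
  ring

lemma gsum_double (S : ℤ) (hS : Odd S) (p : ℕ) :
    ∑ x ∈ range (2 ^ (p + 4)), gg S (p + 4) x = 2 * ∑ x ∈ range (2 ^ (p + 2)), gg S (p + 2) x := by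
  have hsplit : (2:ℕ) ^ (p + 4) = 2 * 2 ^ (p + 3) := by ring
  rw [hsplit, sum_even_odd]
  have heven : ∀ y : ℤ, gg S (p + 4) (2 * y) = gg S (p + 2) y := by
    intro y
    unfold gg
    congr 1
    have h2 := two_pow_ne (p + 2)
    push_cast [pow_add]
    field_simp
  have hodd0 : ∀ y : ℤ, gg S (p + 4) (2 * (y + 2 ^ (p + 1)) + 1) = - gg S (p + 4) (2 * y + 1) := by
    intro y
    unfold gg
    apply ee_neg_of _ _ (S * (2 * y + 1) + S * 2 ^ (p + 1))
    · rcases hS with ⟨s, hs⟩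
      exact ⟨S * y + S * 2 ^ p + s, by rw [hs]; ring⟩
    · have h4 := two_pow_ne (p + 4)
      push_cast [pow_add]
      field_simp
      ring
  have e1 : ∑ y ∈ range (2 ^ (p + 3)), gg S (p + 4) (2 * y)
      = 2 * ∑ x ∈ range (2 ^ (p + 2)), gg S (p + 2) x := by
    have : ∑ y ∈ range (2 ^ (p + 3)), gg S (p + 4) (2 * y)
        = ∑ y ∈ range (2 ^ (p + 3)), gg S (p + 2) y :=
      Finset.sum_congr rfl fun y _ => heven y
    rw [this, show (2:ℕ) ^ (p + 3) = 2 * 2 ^ (p + 2) by ring]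
    have := sum_mul_period (fun x => gg S (p+2) x) (2 ^ (p + 2)) 2 (fun x => by
      simpa using gg_per S (p+2) x)
    simpa using this
  have hanti : ∀ x : ℤ, gg S (p + 4) (2 * (x + (2 ^ (p + 1) : ℕ)) + 1)
      = - gg S (p + 4) (2 * x + 1) := by
    intro x
    have := hodd0 x
    rw [← this]
    congr 2
  have e2 : ∑ y ∈ range (2 ^ (p + 3)), gg S (p + 4) (2 * y + 1) = 0 := by
    set h : ℤ → ℂ := fun x => gg S (p + 4) (2 * x + 1) with hh
    have hanti' : ∀ x : ℤ, h (x + (2 ^ (p + 1) : ℕ)) = - h x := fun x => hanti x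
    have hper : ∀ x : ℤ, h (x + ((2 * 2 ^ (p + 1) : ℕ) : ℤ)) = h x := by
      intro x
      have h1 := hanti' (x + (2 ^ (p + 1) : ℕ))
      have h2 := hanti' x
      rw [h2, neg_neg] at h1
      rw [← h1]
      congr 1
      push_cast
      ring
    have hzero : ∑ x ∈ range (2 * 2 ^ (p + 1)), h x = 0 := by
      rw [two_mul, Finset.sum_range_add]
      have : ∀ y ∈ range (2 ^ (p + 1)), h (((2 ^ (p + 1) + y : ℕ) : ℤ)) = - h y := by
        intro y _
        rw [← hanti' y]
        congr 1
        push_cast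
        ring
      rw [Finset.sum_congr rfl this]
      rw [Finset.sum_neg_distrib]
      ring
    calc ∑ y ∈ range (2 ^ (p + 3)), h y
        = ∑ y ∈ range (2 * (2 * 2 ^ (p + 1))), h y := by ring_nf
      _ = 2 * ∑ x ∈ range (2 * 2 ^ (p + 1)), h x := sum_mul_period h _ 2 hper
      _ = 0 := by rw [hzero]; ring
  rw [e1, e2]; ring

lemma gsum_pow (S : ℤ) (hS : Odd S) (p a : ℕ) :
    ∑ x ∈ range (2 ^ (p + 2 + 2*a)), gg S (p + 2 + 2*a) x
      = 2 ^ a * ∑ x ∈ range (2 ^ (p + 2)), gg S (p + 2) x := by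
  induction a with
  | zero => simp
  | succ a ih =>
      rw [show p + 2 + 2*(a+1) = (p + 2*a) + 4 by ring, gsum_double S hS (p + 2*a),
        show (p + 2*a) + 2 = p + 2 + 2*a by ring, ih]
      ring

noncomputable def TT (S w : ℤ) (α β n : ℕ) (x : ℤ) : ℂ :=
  ee ((S:ℚ) * 2^β * ((2:ℚ)^α * x + (w:ℚ))^2 / 2^n)

lemma TT_bridge (S w : ℤ) (α β n : ℕ) (x : ℕ) :
    Complex.exp (2 * Real.pi * Complex.I *
        ((S * 2 ^ β * ((2 : ℤ) ^ α * (x : ℤ) + w) ^ 2 : ℤ) : ℂ) / ((2 : ℂ) ^ n))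
      = TT S w α β n x := by
  unfold TT ee
  congr 1
  push_cast
  ring

lemma TT_per (S w : ℤ) (α β n : ℕ) (hn : α ≤ n) (x : ℤ) :
    TT S w α β n (x + ((2^n : ℕ) : ℤ)) = TT S w α β n x := by
  unfold TT
  apply ee_eq_of _ _ (S * 2^(α+β) * (2^(α+1)*x + 2*w + 2^(α+n)))
  have h0 : ((2:ℚ))^n ≠ 0 := two_pow_ne n
  push_cast
  simp only [pow_add, pow_succ]
  field_simp
  ring

lemma TT_anti (S : ℤ) (hS : Odd S) (u : ℤ) (hu : Odd u) (γ d β c : ℕ) (x : ℤ) :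
    TT S (2^γ * u) (γ+1+d) β (2*(γ+1+d)+β+2+c) (x + ((2^(d+1+c) : ℕ) : ℤ))
      = - TT S (2^γ * u) (γ+1+d) β (2*(γ+1+d)+β+2+c) x := by
  unfold TT
  apply ee_neg_of _ _ (S * (2^(d+1)*x + u + 2^(2*d+1+c)))
  · obtain ⟨ku, hku⟩ := hu
    refine Odd.mul hS ⟨2^d*x + ku + 2^(2*d+c), ?_⟩
    rw [hku]; ring
  · have h0 : ((2:ℚ))^(2*(γ+1+d)+β+2+c) ≠ 0 := two_pow_ne _
    push_cast
    rw [show 2*(γ+1+d)+β+2+c = γ+γ+d+d+β+c+4 by ring, show 2*d+1+c = d+d+1+c by ring,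
      show d+1+c = d+(1+c) by ring]
    simp only [pow_add]
    field_simp
    ring

lemma TT_div (S v : ℤ) (α β c : ℕ) (x : ℤ) :
    TT S (2^α * v) α β (2*α+β+2+c) x = gg S (c+2) (x + v) := by
  unfold TT gg
  congr 1
  have h0 : ((2:ℚ))^(2*α+β+2+c) ≠ 0 := two_pow_ne _
  have h1 : ((2:ℚ))^(c+2) ≠ 0 := two_pow_ne _
  push_cast
  rw [show 2*α+β+2+c = α+α+β+2+c by ring]
  simp only [pow_add]
  field_simp

lemma gsum_eq (S : ℤ) (k : ℕ) : Gsum S (2^k) = ∑ x ∈ range (2^k), gg S k x := by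
  unfold Gsum gg ee
  apply Finset.sum_congr rfl
  intro x _
  congr 1
  push_cast
  ring

set_option maxHeartbeats 1000000 in
theorem stmt_11 (n : ℕ) (hn : 0 < n) (S : ℤ) (hS : Odd S) (w : ℤ)
    (α β : ℕ) (hα : α ≤ n) (hβ : β ≤ n) (h : 2 * α + β + 2 ≤ n) :
    (¬ (2 : ℤ) ^ α ∣ w →
      ∑ x ∈ Finset.range (2 ^ n),
          Complex.exp (2 * Real.pi * Complex.I *
            ((S * 2 ^ β * ((2 : ℤ) ^ α * (x : ℤ) + w) ^ 2 : ℤ) : ℂ) / ((2 : ℂ) ^ n)) = 0) ∧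
    ((2 : ℤ) ^ α ∣ w →
      ∑ x ∈ Finset.range (2 ^ n),
          Complex.exp (2 * Real.pi * Complex.I *
            ((S * 2 ^ β * ((2 : ℤ) ^ α * (x : ℤ) + w) ^ 2 : ℤ) : ℂ) / ((2 : ℂ) ^ n)) =
        (2 : ℂ) ^ (α + β) * Gsum S (2 ^ (n - β))) := by
  have hbridge : ∑ x ∈ Finset.range (2 ^ n),
      Complex.exp (2 * Real.pi * Complex.I *
        ((S * 2 ^ β * ((2 : ℤ) ^ α * (x : ℤ) + w) ^ 2 : ℤ) : ℂ) / ((2 : ℂ) ^ n))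
      = ∑ x ∈ range (2 ^ n), TT S w α β n x :=
    Finset.sum_congr rfl fun x _ => TT_bridge S w α β n x
  constructor
  · -- case 2^α ∤ w
    intro hndvd
    have hw0 : w ≠ 0 := fun hw => hndvd (hw ▸ dvd_zero _)
    obtain ⟨γ, u0, hu0, habs⟩ :=
      Nat.exists_eq_pow_mul_and_not_dvd (Int.natAbs_ne_zero.mpr hw0) 2 (by norm_num)
    obtain ⟨u, hu, hw⟩ : ∃ u : ℤ, Odd u ∧ w = 2^γ * u := by
      refine ⟨w.sign * u0, ?_, ?_⟩
      · have hodd0 : Odd (u0 : ℤ) := by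
          rw [Int.odd_coe_nat]
          rcases Nat.even_or_odd u0 with he | ho
          · exact absurd he.two_dvd hu0
          · exact ho
        have hsign : w.sign = 1 ∨ w.sign = -1 := by
          rcases lt_trichotomy w 0 with hlt | heq | hgt
          · exact Or.inr (Int.sign_eq_neg_one_of_neg hlt)
          · exact absurd heq hw0
          · exact Or.inl (Int.sign_eq_one_of_pos hgt)
        rcases hsign with hs | hs
        · rw [hs, one_mul]; exact hodd0
        · rw [hs]; simpa using hodd0.neg
      · have h1 := Int.sign_mul_natAbs w
        rw [habs] at h1
        push_cast at h1
        linear_combination - h1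
    have hγ : γ < α := by
      by_contra hge
      exact hndvd (hw ▸ Dvd.dvd.mul_right (pow_dvd_pow 2 (le_of_not_gt hge)) u)
    obtain ⟨d, hd⟩ : ∃ d, α = γ + 1 + d := ⟨α - γ - 1, by omega⟩
    obtain ⟨c, hc⟩ : ∃ c, n = 2*α + β + 2 + c := ⟨n - (2*α+β+2), by omega⟩
    rw [hbridge]
    subst hd hc hw
    have hper : ∀ x : ℤ, TT S (2^γ * u) (γ+1+d) β (2*(γ+1+d)+β+2+c)
        (x + ((2^(2*(γ+1+d)+β+2+c) : ℕ) : ℤ)) = TT S (2^γ * u) (γ+1+d) β (2*(γ+1+d)+β+2+c) x :=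
      fun x => TT_per S (2^γ*u) (γ+1+d) β (2*(γ+1+d)+β+2+c) (by omega) x
    have key := sum_shift_nat (TT S (2^γ*u) (γ+1+d) β (2*(γ+1+d)+β+2+c))
      (2^(2*(γ+1+d)+β+2+c)) hper (2^(d+1+c))
    have key2 : ∑ x ∈ range (2^(2*(γ+1+d)+β+2+c)),
        TT S (2^γ*u) (γ+1+d) β (2*(γ+1+d)+β+2+c) ((x:ℤ) + (2^(d+1+c) : ℕ))
        = - ∑ x ∈ range (2^(2*(γ+1+d)+β+2+c)),
            TT S (2^γ*u) (γ+1+d) β (2*(γ+1+d)+β+2+c) x := by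
      rw [← Finset.sum_neg_distrib]
      exact Finset.sum_congr rfl fun x _ => TT_anti S hS u hu γ d β c x
    rw [key] at key2
    linear_combination key2 / 2
  · -- case 2^α ∣ w
    rintro ⟨v, hv⟩
    obtain ⟨c, hc⟩ : ∃ c, n = 2*α + β + 2 + c := ⟨n - (2*α+β+2), by omega⟩
    rw [hbridge]
    subst hc hv
    have hper : ∀ x : ℤ, gg S (c+2) ((x + ((2^(c+2):ℕ):ℤ)) + v) = gg S (c+2) (x + v) := by
      intro x
      rw [show (x + ((2^(c+2):ℕ):ℤ)) + v = (x + v) + 2^(c+2) by push_cast; ring]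
      exact gg_per S (c+2) (x+v)
    calc ∑ x ∈ range (2 ^ (2*α+β+2+c)), TT S (2^α * v) α β (2*α+β+2+c) x
        = ∑ x ∈ range (2 ^ (2*α+β+2+c)), gg S (c+2) ((x:ℤ) + v) :=
          Finset.sum_congr rfl fun x _ => TT_div S v α β c x
      _ = ∑ x ∈ range (2^(2*α+β) * 2^(c+2)), gg S (c+2) ((x:ℤ) + v) := by
          rw [show 2*α+β+2+c = (2*α+β)+(c+2) by ring, pow_add]
      _ = (2^(2*α+β) : ℕ) * ∑ x ∈ range (2^(c+2)), gg S (c+2) ((x:ℤ) + v) :=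
          sum_mul_period (fun x => gg S (c+2) (x + v)) (2^(c+2)) (2^(2*α+β)) hper
      _ = (2^(2*α+β) : ℕ) * ∑ x ∈ range (2^(c+2)), gg S (c+2) x := by
          have hper2 : ∀ x : ℤ, gg S (c+2) (x + ((2^(c+2):ℕ):ℤ)) = gg S (c+2) x := by
            intro x
            rw [show ((2^(c+2):ℕ):ℤ) = (2:ℤ)^(c+2) by push_cast; ring]
            exact gg_per S (c+2) x
          rw [sum_shift_int (gg S (c+2)) (2^(c+2)) (Nat.two_pow_pos _) hper2 v]
      _ = (2 : ℂ) ^ (α + β) * Gsum S (2 ^ (2*α+β+2+c - β)) := by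
          rw [show 2*α+β+2+c - β = c+2+2*α by omega, gsum_eq, gsum_pow S hS c α]
          push_cast
          ring
end
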